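/- Let 0 = r_0 < r_1 < ... < r_n be real numbers and for t \in [0,1] define H_k(t) = (-1)^{n-k} r_{k+1} \cdots r_n [r_k,...,r_n]f_t for k = 0,...,n-1 and H_n(t) = t^{r_n}, where f_t(x) = t^x. Then \sum_{k=0}^{n} H_k(t) = 1 for all t \in (0,1]. -/

import Mathlib

/-- The divided difference `[x 0, ..., x n] f` at pairwise distinct points,
given by the explicit formula `∑ i, f (x i) / ∏_{j ≠ i} (x i - x j)`. -/
noncomputable def divSum (n : ℕ) (x : Fin (n+1) → ℝ) (f : ℝ → ℝ) : ℝ :=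
  ∑ i : Fin (n+1), f (x i) / ∏ j ∈ Finset.univ.erase i, (x i - x j)


/-- The Gelfond-Bernstein basis function `H^n_{k,Λ}` associated with the sequence
`Λ = (r 0, ..., r n)`: `H^n_k (t) = (-1)^(n-k) r_{k+1} ⋯ r_n [r_k, ..., r_n] f_t`
for `k ≤ n-1` and `H^n_n (t) = t ^ (r n)`, where `f_t x = t ^ x` (real power). -/
noncomputable def GB (n : ℕ) (r : Fin (n+1) → ℝ) (k : Fin (n+1)) (t : ℝ) : ℝ :=
  if k.val = n then t ^ (r k)
  else (-1 : ℝ) ^ (n - k.val) * (∏ j ∈ Finset.Ioi k, r j) *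
    divSum (n - k.val)
      (fun i => r ⟨k.val + i.val, by have h1 := i.isLt; have h2 := k.isLt; omega⟩)
      (fun x => t ^ x)

open Finset

section Aux
variable (n m : ℕ) (a : ℕ → ℝ)

private lemma P_step {k : ℕ} (hk : k ≤ n) :
    ∏ j ∈ Ico k (n+1), a j = a k * ∏ j ∈ Ico (k+1) (n+1), a j := by
  rw [← Finset.insert_Ico_add_one_left_eq_Ico (by omega), prod_insert (by simp)]

private lemma den_step {k : ℕ} (hk : k ≠ m) (hkn : k ≤ n) (f : ℕ → ℝ) :
    ∏ j ∈ (Ico k (n+1)).erase m, f j = f k * ∏ j ∈ (Ico (k+1) (n+1)).erase m, f j := by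
  rw [← Finset.insert_Ico_add_one_left_eq_Ico (show k < n+1 by omega), erase_insert_of_ne hk,
    prod_insert (by simp)]

private lemma den_ne (hne : ∀ j ≤ n, j ≠ m → a m - a j ≠ 0) (k : ℕ) :
    ∏ j ∈ (Ico k (n+1)).erase m, (a m - a j) ≠ 0 := by
  rw [prod_ne_zero_iff]
  intro j hj
  simp only [mem_erase, mem_Ico] at hj
  exact hne j (by omega) hj.1

private lemma telescope (hmn : m ≤ n) (hm : 1 ≤ m)
    (hne : ∀ j ≤ n, j ≠ m → a m - a j ≠ 0)
    (ham : a m ≠ 0) (ha0 : a 0 = 0) :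
    ∀ K, K < m → K < n →
      ∑ k ∈ range (K+1), (-1:ℝ)^(n-k) * (∏ j ∈ Ico (k+1) (n+1), a j) /
        ∏ j ∈ (Ico k (n+1)).erase m, (a m - a j)
      = (-1:ℝ)^(n-K) * (∏ j ∈ Ico (K+1) (n+1), a j) /
        (a m * ∏ j ∈ (Ico (K+1) (n+1)).erase m, (a m - a j)) := by
  intro K
  induction K with
  | zero =>
    intro _ _
    rw [Finset.sum_range_one, den_step n m (by omega) (by omega), ha0, sub_zero]
  | succ K ih =>
    intro hKm hKn
    rw [Finset.sum_range_succ, ih (by omega) (by omega)]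
    have hP : ∏ j ∈ Ico (K+1) (n+1), a j = a (K+1) * ∏ j ∈ Ico (K+2) (n+1), a j :=
      P_step n a (by omega)
    have hD : ∏ j ∈ (Ico (K+1) (n+1)).erase m, (a m - a j)
        = (a m - a (K+1)) * ∏ j ∈ (Ico (K+2) (n+1)).erase m, (a m - a j) :=
      den_step n m (by omega) (by omega) _
    have hs : (-1:ℝ)^(n-K) = -(-1:ℝ)^(n-(K+1)) := by
      have : n - K = (n - (K+1)) + 1 := by omega
      rw [this, pow_succ]; ring
    have h1 : a m - a (K+1) ≠ 0 := hne (K+1) (by omega) (by omega)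
    have h2 := den_ne n m a hne (K+2)
    rw [hP, hD, hs]
    field_simp
    ring

private lemma erase_self {k : ℕ} : (Ico k (n+1)).erase k = Ico (k+1) (n+1) := by
  ext j; simp only [mem_erase, mem_Ico]; omega

private lemma c_mid (hm : 1 ≤ m) (hmn : m < n)
    (hne : ∀ j ≤ n, j ≠ m → a m - a j ≠ 0) (ham : a m ≠ 0) (ha0 : a 0 = 0) :
    ∑ k ∈ range (m+1), (-1:ℝ)^(n-k) * (∏ j ∈ Ico (k+1) (n+1), a j) /
        ∏ j ∈ (Ico k (n+1)).erase m, (a m - a j) = 0 := by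
  obtain ⟨p, rfl⟩ : ∃ p, m = p + 1 := ⟨m - 1, by omega⟩
  rw [Finset.sum_range_succ,
    telescope n (p+1) a (by omega) hm hne ham ha0 p (by omega) (by omega),
    erase_self, P_step n a (by omega)]
  have hD : ∏ j ∈ Ico (p+1+1) (n+1), (a (p+1) - a j) ≠ 0 := by
    have := den_ne n (p+1) a hne (p+1+1)
    rwa [erase_eq_of_notMem (by simp)] at this
  have hs : (-1:ℝ)^(n-p) = -(-1:ℝ)^(n-(p+1)) := by
    rw [show n - p = (n - (p+1)) + 1 by omega, pow_succ]; ring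
  rw [hs]
  field_simp
  ring

private lemma c_top (hn : 1 ≤ n)
    (hne : ∀ j ≤ n, j ≠ n → a n - a j ≠ 0) (han : a n ≠ 0) (ha0 : a 0 = 0) :
    ∑ k ∈ range n, (-1:ℝ)^(n-k) * (∏ j ∈ Ico (k+1) (n+1), a j) /
        ∏ j ∈ (Ico k (n+1)).erase n, (a n - a j) = -1 := by
  obtain ⟨p, rfl⟩ : ∃ p, n = p + 1 := ⟨n - 1, by omega⟩
  rw [telescope (p+1) (p+1) a le_rfl hn hne han ha0 p (by omega) (by omega)]
  rw [erase_self, show (p+1) - p = 1 by omega]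
  have h1 : Ico (p+1+1) (p+1+1) = ∅ := by simp
  have h2 : Ico (p+1) (p+1+1) = {p+1} := by
    ext j; simp only [mem_Ico, mem_singleton]; omega
  rw [h1, h2]
  simp [han]

private lemma c_zero (hn : 1 ≤ n) (ha0 : a 0 = 0)
    (hpos : ∀ j, 1 ≤ j → j ≤ n → a j ≠ 0) :
    (-1:ℝ)^n * (∏ j ∈ Ico 1 (n+1), a j) /
        ∏ j ∈ (Ico 0 (n+1)).erase 0, (a 0 - a j) = 1 := by
  rw [erase_self, ha0]
  have h1 : ∏ j ∈ Ico 1 (n+1), (0 - a j) = (-1:ℝ)^n * ∏ j ∈ Ico 1 (n+1), a j := by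
    calc ∏ j ∈ Ico 1 (n+1), (0 - a j) = ∏ j ∈ Ico 1 (n+1), ((-1) * a j) := by
          apply prod_congr rfl; intros; ring
      _ = (-1:ℝ)^n * ∏ j ∈ Ico 1 (n+1), a j := by
          rw [prod_mul_distrib, prod_const, Nat.card_Ico, Nat.add_sub_cancel]
  rw [h1]
  have h2 : ∏ j ∈ Ico 1 (n+1), a j ≠ 0 := by
    rw [prod_ne_zero_iff]; intro j hj; simp at hj; exact hpos j hj.1 (by omega)
  have h3 : (-1:ℝ)^n ≠ 0 := by positivity
  exact div_self (mul_ne_zero h3 h2)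

private lemma key (n : ℕ) (a : ℕ → ℝ) (ha0 : a 0 = 0)
    (hmono : ∀ i j, i < j → j ≤ n → a i < a j) (t : ℝ) (ht : 0 < t) :
    ∑ k ∈ range n, ((-1:ℝ)^(n-k) * (∏ j ∈ Ico (k+1) (n+1), a j) *
      ∑ m ∈ Ico k (n+1), t ^ a m / ∏ j ∈ (Ico k (n+1)).erase m, (a m - a j))
      + t ^ a n = 1 := by
  rcases Nat.eq_zero_or_pos n with hn | hn
  · subst hn; simp [ha0, Real.rpow_zero]
  have hne : ∀ m ≤ n, ∀ j ≤ n, j ≠ m → a m - a j ≠ 0 := by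
    intro m hm j hj hjm
    rcases lt_or_gt_of_ne hjm with h | h
    · exact ne_of_gt (sub_pos.2 (hmono j m h hm))
    · exact ne_of_lt (sub_neg.2 (hmono m j h hj))
  have hpos : ∀ j, 1 ≤ j → j ≤ n → (0:ℝ) < a j := by
    intro j h1 h2; have := hmono 0 j (by omega) h2; rwa [ha0] at this
  -- push constants inside the inner sums
  have step1 : ∀ k ∈ range n,
      (-1:ℝ)^(n-k) * (∏ j ∈ Ico (k+1) (n+1), a j) *
        ∑ m ∈ Ico k (n+1), t ^ a m / ∏ j ∈ (Ico k (n+1)).erase m, (a m - a j)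
      = ∑ m ∈ Ico k (n+1), t ^ a m *
          ((-1:ℝ)^(n-k) * (∏ j ∈ Ico (k+1) (n+1), a j) /
            ∏ j ∈ (Ico k (n+1)).erase m, (a m - a j)) := by
    intro k _
    rw [Finset.mul_sum]
    exact Finset.sum_congr rfl (fun m _ => by ring)
  rw [Finset.sum_congr rfl step1]
  rw [Finset.sum_comm' (t' := range (n+1)) (s' := fun m => range (min (m+1) n))
    (by intro k m; simp only [mem_range, mem_Ico]; omega)]
  have step2 : ∀ m ∈ range (n+1),
      (∑ k ∈ range (min (m+1) n), t ^ a m *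
        ((-1:ℝ)^(n-k) * (∏ j ∈ Ico (k+1) (n+1), a j) /
          ∏ j ∈ (Ico k (n+1)).erase m, (a m - a j)))
      = t ^ a m * ∑ k ∈ range (min (m+1) n),
          ((-1:ℝ)^(n-k) * (∏ j ∈ Ico (k+1) (n+1), a j) /
            ∏ j ∈ (Ico k (n+1)).erase m, (a m - a j)) := by
    intro m _; rw [Finset.mul_sum]
  rw [Finset.sum_congr rfl step2]
  -- peel first term (m = 0)
  rw [Finset.sum_range_succ']
  have hc0 : t ^ a 0 * ∑ k ∈ range (min (0+1) n),
      ((-1:ℝ)^(n-k) * (∏ j ∈ Ico (k+1) (n+1), a j) /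
        ∏ j ∈ (Ico k (n+1)).erase 0, (a 0 - a j)) = 1 := by
    rw [show min (0+1) n = 1 by omega, Finset.sum_range_one, Nat.sub_zero,
      c_zero n a hn ha0 (fun j h1 h2 => ne_of_gt (hpos j h1 h2)), ha0, Real.rpow_zero, mul_one]
  rw [hc0]
  -- peel last term (m = n) and kill the middle
  obtain ⟨p, rfl⟩ : ∃ p, n = p + 1 := ⟨n - 1, by omega⟩
  rw [Finset.sum_range_succ]
  have hmid : ∀ i ∈ range p, t ^ a (i+1) * ∑ k ∈ range (min (i+1+1) (p+1)),
      ((-1:ℝ)^(p+1-k) * (∏ j ∈ Ico (k+1) (p+1+1), a j) /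
        ∏ j ∈ (Ico k (p+1+1)).erase (i+1), (a (i+1) - a j)) = 0 := by
    intro i hi
    simp only [mem_range] at hi
    rw [show min (i+1+1) (p+1) = i+1+1 by omega,
      c_mid (p+1) (i+1) a (by omega) (by omega) (hne (i+1) (by omega))
        (ne_of_gt (hpos (i+1) (by omega) (by omega))) ha0, mul_zero]
  rw [Finset.sum_eq_zero hmid]
  have hctop : t ^ a (p+1) * ∑ k ∈ range (min (p+1+1) (p+1)),
      ((-1:ℝ)^(p+1-k) * (∏ j ∈ Ico (k+1) (p+1+1), a j) /
        ∏ j ∈ (Ico k (p+1+1)).erase (p+1), (a (p+1) - a j)) = -(t ^ a (p+1)) := by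
    rw [show min (p+1+1) (p+1) = p+1 by omega,
      c_top (p+1) a hn (hne (p+1) le_rfl)
        (ne_of_gt (hpos (p+1) (by omega) le_rfl)) ha0]
    ring
  rw [hctop]
  ring


private lemma GB_eq (n : ℕ) (r : Fin (n+1) → ℝ) (a : ℕ → ℝ)
    (ha : ∀ (j : ℕ) (hj : j < n+1), a j = r ⟨j, hj⟩)
    (k : Fin (n+1)) (hk : k.val < n) (t : ℝ) :
    GB n r k t = (-1:ℝ)^(n - k.val) * (∏ j ∈ Ico (k.val+1) (n+1), a j) *
      ∑ m ∈ Ico k.val (n+1), t ^ a m /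
        ∏ j ∈ (Ico k.val (n+1)).erase m, (a m - a j) := by
  unfold GB
  rw [if_neg (by omega)]
  congr 1
  · congr 1
    apply Finset.prod_bij (i := fun (j : Fin (n+1)) _ => j.val)
    · intro j hj
      simp only [Finset.mem_Ioi, Fin.lt_def] at hj
      simp only [Finset.mem_Ico]
      exact ⟨hj, j.isLt⟩
    · intro x _ y _ h; exact Fin.ext h
    · intro m hm
      simp only [Finset.mem_Ico] at hm
      exact ⟨⟨m, by omega⟩, by simp [Finset.mem_Ioi, Fin.lt_def]; omega, rfl⟩
    · intro j hj
      exact (ha j.val j.isLt).symm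
  · unfold divSum
    have hx : ∀ (j : Fin (n - k.val + 1)),
        r ⟨k.val + j.val, by have := j.isLt; have := k.isLt; omega⟩
          = a (k.val + j.val) := by
      intro j
      exact (ha (k.val + j.val) (by have := j.isLt; have := k.isLt; omega)).symm
    apply Finset.sum_bij (i := fun (i : Fin (n - k.val + 1)) _ => k.val + i.val)
    · intro i _
      have := i.isLt
      simp only [Finset.mem_Ico]; omega
    · intro x _ y _ h
      exact Fin.ext (by omega)
    · intro m hm
      simp only [Finset.mem_Ico] at hm
      exact ⟨⟨m - k.val, by omega⟩, Finset.mem_univ _, by simp; omega⟩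
    · intro i _
      dsimp only
      rw [hx i]
      congr 1
      apply Finset.prod_bij (i := fun (j : Fin (n - k.val + 1)) _ => k.val + j.val)
      · intro j hj
        simp only [Finset.mem_erase] at hj ⊢
        have := j.isLt
        refine ⟨?_, by simp only [Finset.mem_Ico]; omega⟩
        intro hc; exact hj.1 (Fin.ext (by omega))
      · intro x _ y _ h; exact Fin.ext (by omega)
      · intro m hm
        simp only [Finset.mem_erase, Finset.mem_Ico] at hm
        refine ⟨⟨m - k.val, by omega⟩, ?_, by simp; omega⟩
        simp only [Finset.mem_erase, Finset.mem_univ, and_true]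
        intro hc
        apply hm.1
        have : (⟨m - k.val, by omega⟩ : Fin (n - k.val + 1)).val = i.val := by rw [hc]
        simp at this; omega
      · intro j _
        rw [hx j]

end Aux

theorem stmt4 (n : ℕ) (r : Fin (n+1) → ℝ) (hr : StrictMono r) (h0 : r 0 = 0)
    (t : ℝ) (ht : t ∈ Set.Ioc (0:ℝ) 1) :
    ∑ k : Fin (n+1), GB n r k t = 1 := by
  set a : ℕ → ℝ := fun j => r ⟨min j n, by omega⟩ with ha_def
  have ha : ∀ (j : ℕ) (hj : j < n+1), a j = r ⟨j, hj⟩ := by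
    intro j hj
    simp only [ha_def]
    congr 1
    exact Fin.ext (min_eq_left (by omega))
  have ha0 : a 0 = 0 := by rw [ha 0 (by omega)]; exact h0
  have hmono : ∀ i j, i < j → j ≤ n → a i < a j := by
    intro i j hij hj
    rw [ha i (by omega), ha j (by omega)]
    exact hr (by simp [Fin.lt_def]; omega)
  have hkey := key n a ha0 hmono t ht.1
  set g : ℕ → ℝ := fun k => if h : k < n+1 then GB n r ⟨k, h⟩ t else 0 with hg_def
  have h1 : ∑ k : Fin (n+1), GB n r k t = ∑ k ∈ Finset.range (n+1), g k := by
    rw [← Fin.sum_univ_eq_sum_range]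
    apply Finset.sum_congr rfl
    intro k _
    simp only [hg_def, k.isLt, dif_pos]
  rw [h1, Finset.sum_range_succ]
  have hgn : g n = t ^ a n := by
    simp only [hg_def, Nat.lt_succ_self, dif_pos, GB, if_true]
    rw [ha n (by omega)]
  have hgk : ∀ k ∈ Finset.range n, g k =
      (-1:ℝ)^(n-k) * (∏ j ∈ Finset.Ico (k+1) (n+1), a j) *
        ∑ m ∈ Finset.Ico k (n+1), t ^ a m /
          ∏ j ∈ (Finset.Ico k (n+1)).erase m, (a m - a j) := by
    intro k hk
    simp only [Finset.mem_range] at hk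
    have hk1 : k < n + 1 := by omega
    simp only [hg_def, dif_pos hk1]
    exact GB_eq n r a ha ⟨k, hk1⟩ hk t
  rw [Finset.sum_congr rfl hgk, hgn]
  exact hkey
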